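/- Let G ∈ {C5, bull, gem, co-gem} and let (A,B) be a vertex partition of G with |A| < |B|, and let H = G ⊕ P for some P with (A,B) ∈ P ⊆ {(A,A),(B,B),(A,B)}. If H has a connected component on exactly two vertices, then either G is the gem, A consists of the two vertices of degree 2, and P = {(B,B),(A,B)}, or G is the bull, A consists of the two vertices of degree 3, and P = {(A,A),(A,B)}. -/

import Mathlib

open SimpleGraph Set

namespace FlipWidth

variable {V : Type*}

/-- The flip of a graph `G` by a pair `(A, B)` of vertex sets. -/
def flip (G : SimpleGraph V) (A B : Set V) : SimpleGraph V where
  Adj u v := u ≠ v ∧ Xor' ((u ∈ A ∧ v ∈ B) ∨ (u ∈ B ∧ v ∈ A)) (G.Adj u v)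
  symm := by
    constructor
    intro u v ⟨h, hx⟩
    refine ⟨h.symm, ?_⟩
    have := G.adj_comm u v
    unfold Xor' at *
    rw [← this, show ((v ∈ A ∧ u ∈ B) ∨ (v ∈ B ∧ u ∈ A)) = ((u ∈ A ∧ v ∈ B) ∨ (u ∈ B ∧ v ∈ A)) from propext (by tauto)]; exact hx
  loopless := by constructor; intro v h; exact h.1 rfl

/-- Whether a pair of vertex sets "crosses" the (unordered) pair of vertices `u, v`. -/
def crossPair (p : Set V × Set V) (u v : V) : Prop :=
  (u ∈ p.1 ∧ v ∈ p.2) ∨ (u ∈ p.2 ∧ v ∈ p.1)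

/-- The graph obtained from `G` by flipping every pair in `P` (order irrelevant
since flips commute: adjacency is toggled according to the parity of the number
of pairs in `P` crossing the two vertices). -/
def flips (G : SimpleGraph V) (P : Set (Set V × Set V)) : SimpleGraph V where
  Adj u v := u ≠ v ∧ Xor' (Odd {p ∈ P | crossPair p u v}.ncard) (G.Adj u v)
  symm := by
    constructor
    intro u v ⟨h, hx⟩
    refine ⟨h.symm, ?_⟩
    have hset : {p ∈ P | crossPair p v u} = {p ∈ P | crossPair p u v} := by
      ext p; unfold crossPair; constructor <;> (intro ⟨h1, h2⟩; exact ⟨h1, by tauto⟩)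
    rw [hset]
    have := G.adj_comm u v
    unfold Xor' at *
    rw [← this]; exact hx
  loopless := by constructor; intro v h; exact h.1 rfl

/-- `A` is complete to `B` in `G`. -/
def Complete (G : SimpleGraph V) (A B : Set V) : Prop :=
  ∀ a ∈ A, ∀ b ∈ B, G.Adj a b

/-- `A` is anti-complete to `B` in `G`. -/
def Anticomplete (G : SimpleGraph V) (A B : Set V) : Prop :=
  ∀ a ∈ A, ∀ b ∈ B, ¬ G.Adj a b

/-- `(V1, V2)` is a bi-join in `G`. -/
def IsBiJoin (G : SimpleGraph V) (V1 V2 : Set V) : Prop :=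
  ∃ W1 W2 : Set V, W1 ⊆ V1 ∧ W2 ⊆ V2 ∧
    Complete G W1 W2 ∧ Anticomplete G W1 (V2 \ W2) ∧
    Complete G (V1 \ W1) (V2 \ W2) ∧ Anticomplete G (V1 \ W1) W2

/-- `(W1, V1\W1, W2, V2\W2)` is a bi-join partition of `(V1, V2)`. -/
def IsBiJoinPartition (G : SimpleGraph V) (V1 V2 W1 W2 : Set V) : Prop :=
  W1 ⊆ V1 ∧ W2 ⊆ V2 ∧
    Complete G W1 W2 ∧ Anticomplete G W1 (V2 \ W2) ∧
    Complete G (V1 \ W1) (V2 \ W2) ∧ Anticomplete G (V1 \ W1) W2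

/-- Degree of a vertex, as the cardinality of its neighborhood. -/
noncomputable def ndeg (G : SimpleGraph V) (v : V) : ℕ := (G.neighborSet v).ncard

/-- `u` and `v` lie in two distinct sets among `A`, `B`, `C`. -/
def crossParts (A B C : Set V) (u v : V) : Prop :=
  (u ∈ A ∧ v ∈ B) ∨ (u ∈ B ∧ v ∈ A) ∨ (u ∈ A ∧ v ∈ C) ∨ (u ∈ C ∧ v ∈ A) ∨
    (u ∈ B ∧ v ∈ C) ∨ (u ∈ C ∧ v ∈ B)

/-- The cycle on 5 vertices. -/
def C5 : SimpleGraph (Fin 5) := SimpleGraph.fromRel (fun u v => v = u + 1)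

/-- The bull: a triangle `0,1,2` with pendant vertices `3` (at `0`) and `4` (at `1`). -/
def bull : SimpleGraph (Fin 5) :=
  SimpleGraph.fromRel (fun u v =>
    (u, v) ∈ ([(0,1),(1,2),(0,2),(0,3),(1,4)] : List (Fin 5 × Fin 5)))

/-- The gem: the path `0-1-2-3` plus a dominating vertex `4`. -/
def gem : SimpleGraph (Fin 5) :=
  SimpleGraph.fromRel (fun u v =>
    (u, v) ∈ ([(0,1),(1,2),(2,3),(4,0),(4,1),(4,2),(4,3)] : List (Fin 5 × Fin 5)))

/-- The co-gem: the path `0-1-2-3` plus an isolated vertex `4`. -/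
def cogem : SimpleGraph (Fin 5) :=
  SimpleGraph.fromRel (fun u v =>
    (u, v) ∈ ([(0,1),(1,2),(2,3)] : List (Fin 5 × Fin 5)))

/-- The four obstruction graphs. -/
def Fobs : Set (SimpleGraph (Fin 5)) := {C5, bull, gem, cogem}

end FlipWidth

open FlipWidth

private lemma walk_mem_closed {V : Type*} {G : SimpleGraph V} {S : Set V}
    (hS : ∀ x ∈ S, ∀ y, G.Adj x y → y ∈ S) :
    ∀ {u v : V}, G.Walk u v → u ∈ S → v ∈ S := by
  intro u v p
  induction p with
  | nil => exact id
  | cons h _ ih => exact fun hu => ih (hS _ hu _ h)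

private lemma comp_two_iff {V : Type*} (G : SimpleGraph V) :
    (∃ c : G.ConnectedComponent, c.supp.ncard = 2) ↔
      ∃ u v : V, u ≠ v ∧ G.Adj u v ∧ (∀ w, G.Adj u w → w = v) ∧
        (∀ w, G.Adj v w → w = u) := by
  constructor
  · rintro ⟨c, hc⟩
    rw [Set.ncard_eq_two] at hc
    obtain ⟨u, v, huv, hsupp⟩ := hc
    have hu : u ∈ c.supp := by rw [hsupp]; exact Set.mem_insert _ _
    have hv : v ∈ c.supp := by rw [hsupp]; exact Set.mem_insert_iff.mpr (Or.inr rfl)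
    rw [SimpleGraph.ConnectedComponent.mem_supp_iff] at hu hv
    have hmem : ∀ w, G.Adj u w ∨ G.Adj v w → w = u ∨ w = v := by
      intro w hw
      have hws : w ∈ c.supp := by
        rw [SimpleGraph.ConnectedComponent.mem_supp_iff]
        rcases hw with h | h
        · exact (SimpleGraph.ConnectedComponent.connectedComponentMk_eq_of_adj h).symm.trans hu
        · exact (SimpleGraph.ConnectedComponent.connectedComponentMk_eq_of_adj h).symm.trans hv
      rwa [hsupp] at hws
    have hr : G.Reachable u v := SimpleGraph.ConnectedComponent.eq.mp (hu.trans hv.symm)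
    obtain ⟨p⟩ := hr
    cases p with
    | nil => exact absurd rfl huv
    | @cons _ w _ h q =>
        have hwv : w = v :=
          (hmem _ (Or.inl h)).resolve_left (fun e => G.loopless.irrefl u (e ▸ h))
        refine ⟨u, v, huv, hwv ▸ h, ?_, ?_⟩
        · intro w' hw'
          exact (hmem w' (Or.inl hw')).resolve_left (fun e => G.loopless.irrefl u (e ▸ hw'))
        · intro w' hw'
          exact (hmem w' (Or.inr hw')).resolve_right (fun e => G.loopless.irrefl v (e ▸ hw'))
  · rintro ⟨u, v, huv, hadj, h1, h2⟩
    refine ⟨G.connectedComponentMk u, ?_⟩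
    have hcl : ∀ x ∈ ({u, v} : Set V), ∀ y, G.Adj x y → y ∈ ({u, v} : Set V) := by
      rintro x (rfl | rfl) y hy
      · exact Or.inr (h1 y hy)
      · exact Or.inl (h2 y hy)
    have hsupp : (G.connectedComponentMk u).supp = {u, v} := by
      apply Set.eq_of_subset_of_subset
      · intro w hw
        rw [SimpleGraph.ConnectedComponent.mem_supp_iff] at hw
        obtain ⟨p⟩ := (SimpleGraph.ConnectedComponent.eq.mp hw).symm
        exact walk_mem_closed hcl p (Set.mem_insert _ _)
      · rintro w (rfl | rfl)
        · exact SimpleGraph.ConnectedComponent.mem_supp_iff _ _ |>.mpr rfl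
        · exact SimpleGraph.ConnectedComponent.mem_supp_iff _ _ |>.mpr
            (SimpleGraph.ConnectedComponent.connectedComponentMk_eq_of_adj hadj.symm)
    rw [hsupp, Set.ncard_pair huv]

private lemma xor_congr {a b c d : Prop} (h1 : a ↔ c) (h2 : b ↔ d) :
    Xor' a b ↔ Xor' c d := by unfold Xor'; rw [h1, h2]

private lemma odd_sep_insert {α : Type*} {x : α} {s : Set α} (hx : x ∉ s)
    (hfin : s.Finite) (Q : α → Prop) :
    Odd {p ∈ insert x s | Q p}.ncard ↔ Xor' (Q x) (Odd {p ∈ s | Q p}.ncard) := by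
  have hfin' : {p ∈ s | Q p}.Finite := hfin.subset (Set.sep_subset _ _)
  by_cases h : Q x
  · have hset : {p ∈ insert x s | Q p} = insert x {p ∈ s | Q p} := by
      ext p
      simp only [Set.mem_sep_iff, Set.mem_insert_iff]
      constructor
      · rintro ⟨(rfl | hp), hq⟩
        · exact Or.inl rfl
        · exact Or.inr ⟨hp, hq⟩
      · rintro (rfl | ⟨hp, hq⟩)
        · exact ⟨Or.inl rfl, h⟩
        · exact ⟨Or.inr hp, hq⟩
    rw [hset, Set.ncard_insert_of_notMem (fun hc => hx hc.1) hfin', Nat.odd_add_one]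
    unfold Xor' Xor
    tauto
  · have hset : {p ∈ insert x s | Q p} = {p ∈ s | Q p} := by
      ext p
      simp only [Set.mem_sep_iff, Set.mem_insert_iff]
      constructor
      · rintro ⟨(rfl | hp), hq⟩
        · exact absurd hq h
        · exact ⟨hp, hq⟩
      · rintro ⟨hp, hq⟩
        exact ⟨Or.inr hp, hq⟩
    rw [hset]
    unfold Xor' Xor
    tauto

private lemma odd_sep_singleton {α : Type*} (x : α) (Q : α → Prop) :
    Odd {p ∈ ({x} : Set α) | Q p}.ncard ↔ Q x := by
  have h1 : ({x} : Set α) = insert x (∅ : Set α) := by simp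
  have h2 : {p ∈ (∅ : Set α) | Q p} = ∅ := by ext p; simp
  rw [h1, odd_sep_insert (Set.notMem_empty x) Set.finite_empty, h2]
  simp [Xor', Xor, Set.ncard_empty]

private lemma odd_sep_pair {α : Type*} {x y : α} (hxy : x ≠ y) (Q : α → Prop) :
    Odd {p ∈ ({x, y} : Set α) | Q p}.ncard ↔ Xor' (Q x) (Q y) := by
  rw [show ({x, y} : Set α) = insert x {y} from rfl,
    odd_sep_insert (by simpa using hxy) (Set.finite_singleton y), odd_sep_singleton]

private lemma odd_sep_triple {α : Type*} {x y z : α} (hxy : x ≠ y) (hxz : x ≠ z)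
    (hyz : y ≠ z) (Q : α → Prop) :
    Odd {p ∈ ({x, y, z} : Set α) | Q p}.ncard ↔ Xor' (Q x) (Xor' (Q y) (Q z)) := by
  rw [show ({x, y, z} : Set α) = insert x {y, z} from rfl,
    odd_sep_insert (by simp [hxy, hxz]) ((Set.finite_singleton z).insert y),
    odd_sep_pair hyz]

private abbrev c5L : List (Fin 5 × Fin 5) := [(0,1),(1,2),(2,3),(3,4),(4,0)]
private abbrev bullL : List (Fin 5 × Fin 5) := [(0,1),(1,2),(0,2),(0,3),(1,4)]
private abbrev gemL : List (Fin 5 × Fin 5) := [(0,1),(1,2),(2,3),(4,0),(4,1),(4,2),(4,3)]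
private abbrev cogemL : List (Fin 5 × Fin 5) := [(0,1),(1,2),(2,3)]

private abbrev ladj (L : List (Fin 5 × Fin 5)) (u v : Fin 5) : Prop :=
  u ≠ v ∧ ((u, v) ∈ L ∨ (v, u) ∈ L)

private abbrev cAB (a : Finset (Fin 5)) (u v : Fin 5) : Prop :=
  (u ∈ a ∧ v ∉ a) ∨ (u ∉ a ∧ v ∈ a)
private abbrev cAA (a : Finset (Fin 5)) (u v : Fin 5) : Prop := u ∈ a ∧ v ∈ a
private abbrev cBB (a : Finset (Fin 5)) (u v : Fin 5) : Prop := u ∉ a ∧ v ∉ a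

private abbrev padj (L : List (Fin 5 × Fin 5)) (c : Prop) (u v : Fin 5) : Prop :=
  u ≠ v ∧ Xor' c (ladj L u v)

private abbrev good (adj : Fin 5 → Fin 5 → Prop) : Prop :=
  ∃ u v : Fin 5, u ≠ v ∧ adj u v ∧ (∀ w, adj u w → w = v) ∧ (∀ w, adj v w → w = u)

private instance goodDec (adj : Fin 5 → Fin 5 → Prop) [∀ u v, Decidable (adj u v)] :
    Decidable (good adj) := by unfold good; infer_instance

private instance xorDec' {a b : Prop} [Decidable a] [Decidable b] : Decidable (Xor' a b) :=
  inferInstanceAs (Decidable (Xor a b))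

private lemma c5_adj : ∀ u v, C5.Adj u v ↔ ladj c5L u v := by
  have h : ∀ u v : Fin 5, (u ≠ v ∧ (v = u + 1 ∨ u = v + 1)) ↔ ladj c5L u v := by decide
  intro u v
  rw [C5, SimpleGraph.fromRel_adj]
  exact h u v

private lemma bull_adj : ∀ u v, bull.Adj u v ↔ ladj bullL u v := by
  intro u v; rw [bull, SimpleGraph.fromRel_adj]

private lemma gem_adj : ∀ u v, gem.Adj u v ↔ ladj gemL u v := by
  intro u v; rw [gem, SimpleGraph.fromRel_adj]

private lemma cogem_adj : ∀ u v, cogem.Adj u v ↔ ladj cogemL u v := by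
  intro u v; rw [cogem, SimpleGraph.fromRel_adj]

private lemma crossPair_AB (a : Finset (Fin 5)) (u v : Fin 5) :
    crossPair ((↑a : Set (Fin 5)), (↑(aᶜ) : Set (Fin 5))) u v ↔ cAB a u v := by
  simp [crossPair, cAB]

private lemma crossPair_AA (a : Finset (Fin 5)) (u v : Fin 5) :
    crossPair ((↑a : Set (Fin 5)), (↑a : Set (Fin 5))) u v ↔ cAA a u v := by
  simp [crossPair, cAA]

private lemma crossPair_BB (a : Finset (Fin 5)) (u v : Fin 5) :
    crossPair ((↑(aᶜ) : Set (Fin 5)), (↑(aᶜ) : Set (Fin 5))) u v ↔ cBB a u v := by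
  simp [crossPair, cBB]

private lemma main_core {G : SimpleGraph (Fin 5)} {L : List (Fin 5 × Fin 5)}
    (hGL : ∀ u v, G.Adj u v ↔ ladj L u v)
    {P : Set (Set (Fin 5) × Set (Fin 5))}
    (c : Fin 5 → Fin 5 → Prop)
    (hPc : ∀ u v, Odd {p ∈ P | crossPair p u v}.ncard ↔ c u v)
    (hcomp : ∃ cc : (flips G P).ConnectedComponent, cc.supp.ncard = 2) :
    good (fun u v => padj L (c u v) u v) := by
  rw [comp_two_iff] at hcomp
  have hadj : ∀ u v, (flips G P).Adj u v ↔ padj L (c u v) u v := fun u v =>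
    and_congr_right fun _ => xor_congr (hPc u v) (hGL u v)
  simp only [hadj] at hcomp
  exact hcomp

set_option synthInstance.maxHeartbeats 400000
set_option synthInstance.maxSize 1024

private lemma core_c5_AB : ∀ a : Finset (Fin 5), a.card < aᶜ.card →
    ¬ good (fun u v => padj c5L (cAB a u v) u v) := by decide
private lemma core_c5_AA : ∀ a : Finset (Fin 5), a.card < aᶜ.card →
    ¬ good (fun u v => padj c5L (Xor' (cAA a u v) (cAB a u v)) u v) := by decide
private lemma core_c5_BB : ∀ a : Finset (Fin 5), a.card < aᶜ.card →
    ¬ good (fun u v => padj c5L (Xor' (cBB a u v) (cAB a u v)) u v) := by decide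
private lemma core_c5_AABB : ∀ a : Finset (Fin 5), a.card < aᶜ.card →
    ¬ good (fun u v => padj c5L (Xor' (cAA a u v) (Xor' (cBB a u v) (cAB a u v))) u v) := by
  decide

private lemma core_bull_AB : ∀ a : Finset (Fin 5), a.card < aᶜ.card →
    ¬ good (fun u v => padj bullL (cAB a u v) u v) := by decide
private lemma core_bull_AA : ∀ a : Finset (Fin 5), a.card < aᶜ.card →
    good (fun u v => padj bullL (Xor' (cAA a u v) (cAB a u v)) u v) → a = {0, 1} := by decide
private lemma core_bull_BB : ∀ a : Finset (Fin 5), a.card < aᶜ.card →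
    ¬ good (fun u v => padj bullL (Xor' (cBB a u v) (cAB a u v)) u v) := by decide
private lemma core_bull_AABB : ∀ a : Finset (Fin 5), a.card < aᶜ.card →
    ¬ good (fun u v => padj bullL (Xor' (cAA a u v) (Xor' (cBB a u v) (cAB a u v))) u v) := by
  decide

private lemma core_gem_AB : ∀ a : Finset (Fin 5), a.card < aᶜ.card →
    ¬ good (fun u v => padj gemL (cAB a u v) u v) := by decide
private lemma core_gem_AA : ∀ a : Finset (Fin 5), a.card < aᶜ.card →
    ¬ good (fun u v => padj gemL (Xor' (cAA a u v) (cAB a u v)) u v) := by decide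
private lemma core_gem_BB : ∀ a : Finset (Fin 5), a.card < aᶜ.card →
    good (fun u v => padj gemL (Xor' (cBB a u v) (cAB a u v)) u v) → a = {0, 3} := by decide
private lemma core_gem_AABB : ∀ a : Finset (Fin 5), a.card < aᶜ.card →
    ¬ good (fun u v => padj gemL (Xor' (cAA a u v) (Xor' (cBB a u v) (cAB a u v))) u v) := by
  decide

private lemma core_cogem_AB : ∀ a : Finset (Fin 5), a.card < aᶜ.card →
    ¬ good (fun u v => padj cogemL (cAB a u v) u v) := by decide
private lemma core_cogem_AA : ∀ a : Finset (Fin 5), a.card < aᶜ.card →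
    ¬ good (fun u v => padj cogemL (Xor' (cAA a u v) (cAB a u v)) u v) := by decide
private lemma core_cogem_BB : ∀ a : Finset (Fin 5), a.card < aᶜ.card →
    ¬ good (fun u v => padj cogemL (Xor' (cBB a u v) (cAB a u v)) u v) := by decide
private lemma core_cogem_AABB : ∀ a : Finset (Fin 5), a.card < aᶜ.card →
    ¬ good (fun u v => padj cogemL (Xor' (cAA a u v) (Xor' (cBB a u v) (cAB a u v))) u v) := by
  decide

private lemma ndeg_gem_0 : ndeg gem 0 = 2 := by
  have h : gem.neighborSet 0 = ↑({1, 4} : Finset (Fin 5)) := by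
    ext w
    rw [SimpleGraph.mem_neighborSet, gem_adj 0 w, Finset.mem_coe]
    fin_cases w <;> decide
  show (gem.neighborSet 0).ncard = 2
  rw [h, Set.ncard_coe_finset]
  rfl

private lemma ndeg_gem_3 : ndeg gem 3 = 2 := by
  have h : gem.neighborSet 3 = ↑({2, 4} : Finset (Fin 5)) := by
    ext w
    rw [SimpleGraph.mem_neighborSet, gem_adj 3 w, Finset.mem_coe]
    fin_cases w <;> decide
  show (gem.neighborSet 3).ncard = 2
  rw [h, Set.ncard_coe_finset]
  rfl

private lemma ndeg_bull_0 : ndeg bull 0 = 3 := by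
  have h : bull.neighborSet 0 = ↑({1, 2, 3} : Finset (Fin 5)) := by
    ext w
    rw [SimpleGraph.mem_neighborSet, bull_adj 0 w, Finset.mem_coe]
    fin_cases w <;> decide
  show (bull.neighborSet 0).ncard = 3
  rw [h, Set.ncard_coe_finset]
  rfl

private lemma ndeg_bull_1 : ndeg bull 1 = 3 := by
  have h : bull.neighborSet 1 = ↑({0, 2, 4} : Finset (Fin 5)) := by
    ext w
    rw [SimpleGraph.mem_neighborSet, bull_adj 1 w, Finset.mem_coe]
    fin_cases w <;> decide
  show (bull.neighborSet 1).ncard = 3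
  rw [h, Set.ncard_coe_finset]
  rfl


open FlipWidth in
/-- If `G ∈ {C5, bull, gem, cogem}`, `(A,B)` is a vertex partition of `G` with
`|A| < |B|`, `(A,B) ∈ P ⊆ {(A,A),(B,B),(A,B)}` and `H = G ⊕ P` has a connected
component on exactly two vertices, then either `G` is the gem, `A` consists of
the two vertices of degree `2` and `P = {(B,B),(A,B)}`, or `G` is the bull, `A`
consists of the two vertices of degree `3` and `P = {(A,A),(A,B)}`. -/
theorem component_two_cross_flip :
    ∀ G ∈ Fobs, ∀ A B : Set (Fin 5), Disjoint A B → A ∪ B = Set.univ →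
      A.ncard < B.ncard →
      ∀ P : Set (Set (Fin 5) × Set (Fin 5)),
        (A, B) ∈ P → P ⊆ {(A, A), (B, B), (A, B)} →
      (∃ c : (flips G P).ConnectedComponent, c.supp.ncard = 2) →
      (G = gem ∧ (∃ x y : Fin 5, x ≠ y ∧ ndeg G x = 2 ∧ ndeg G y = 2 ∧
          A = {x, y}) ∧ P = {(B, B), (A, B)}) ∨
        (G = bull ∧ (∃ x y : Fin 5, x ≠ y ∧ ndeg G x = 3 ∧ ndeg G y = 3 ∧
          A = {x, y}) ∧ P = {(A, A), (A, B)}) := by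
  intro G hG A B hdis huniv hcard P hPA hPsub hcomp
  have hne : A ≠ B := fun h => lt_irrefl _ (h ▸ hcard)
  have hBA : B = Aᶜ := by
    ext x
    constructor
    · intro hx h'
      exact Set.disjoint_left.mp hdis h' hx
    · intro hx
      have hx2 : x ∈ A ∪ B := huniv.symm ▸ Set.mem_univ x
      rcases hx2 with h | h
      · exact absurd h hx
      · exact h
  obtain ⟨a, rfl⟩ : ∃ a : Finset (Fin 5), A = ↑a := ⟨(Set.toFinite A).toFinset, (Set.Finite.coe_toFinset _).symm⟩
  have hBa : B = ↑(aᶜ) := by rw [hBA, Finset.coe_compl]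
  subst hBa
  have hcard' : a.card < aᶜ.card := by
    rwa [Set.ncard_coe_finset, Set.ncard_coe_finset] at hcard
  have dAABB : (((↑a : Set (Fin 5)), (↑a : Set (Fin 5))) : Set (Fin 5) × Set (Fin 5)) ≠
      ((↑(aᶜ) : Set (Fin 5)), (↑(aᶜ) : Set (Fin 5))) :=
    fun h => hne (congrArg Prod.fst h)
  have dAAAB : (((↑a : Set (Fin 5)), (↑a : Set (Fin 5))) : Set (Fin 5) × Set (Fin 5)) ≠
      ((↑a : Set (Fin 5)), (↑(aᶜ) : Set (Fin 5))) :=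
    fun h => hne (congrArg Prod.snd h)
  have dBBAB : (((↑(aᶜ) : Set (Fin 5)), (↑(aᶜ) : Set (Fin 5))) : Set (Fin 5) × Set (Fin 5)) ≠
      ((↑a : Set (Fin 5)), (↑(aᶜ) : Set (Fin 5))) :=
    fun h => hne (congrArg Prod.fst h).symm
  have hPmem : ∀ p ∈ P, p = ((↑a : Set (Fin 5)), (↑a : Set (Fin 5))) ∨
      p = ((↑(aᶜ) : Set (Fin 5)), (↑(aᶜ) : Set (Fin 5))) ∨
      p = ((↑a : Set (Fin 5)), (↑(aᶜ) : Set (Fin 5))) := fun p hp => by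
    simpa using hPsub hp
  simp only [Fobs, Set.mem_insert_iff, Set.mem_singleton_iff] at hG
  by_cases h1 : (((↑a : Set (Fin 5)), (↑a : Set (Fin 5))) : Set (Fin 5) × Set (Fin 5)) ∈ P <;>
    by_cases h2 : (((↑(aᶜ) : Set (Fin 5)), (↑(aᶜ) : Set (Fin 5))) : Set (Fin 5) × Set (Fin 5)) ∈ P
  · -- P = {(A,A),(B,B),(A,B)}
    have hP : P = {((↑a : Set (Fin 5)), (↑a : Set (Fin 5))),
        ((↑(aᶜ) : Set (Fin 5)), (↑(aᶜ) : Set (Fin 5))),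
        ((↑a : Set (Fin 5)), (↑(aᶜ) : Set (Fin 5)))} := by
      ext p
      simp only [Set.mem_insert_iff, Set.mem_singleton_iff]
      constructor
      · exact hPmem p
      · rintro (rfl | rfl | rfl)
        exacts [h1, h2, hPA]
    have hodd : ∀ u v, Odd {p ∈ P | crossPair p u v}.ncard ↔
        Xor' (cAA a u v) (Xor' (cBB a u v) (cAB a u v)) := by
      intro u v
      rw [hP, odd_sep_triple dAABB dAAAB dBBAB]
      exact xor_congr (crossPair_AA a u v)
        (xor_congr (crossPair_BB a u v) (crossPair_AB a u v))
    rcases hG with rfl | rfl | rfl | rfl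
    · exact absurd (main_core c5_adj _ hodd hcomp) (core_c5_AABB a hcard')
    · exact absurd (main_core bull_adj _ hodd hcomp) (core_bull_AABB a hcard')
    · exact absurd (main_core gem_adj _ hodd hcomp) (core_gem_AABB a hcard')
    · exact absurd (main_core cogem_adj _ hodd hcomp) (core_cogem_AABB a hcard')
  · -- P = {(A,A),(A,B)}  (bull case)
    have hP : P = {((↑a : Set (Fin 5)), (↑a : Set (Fin 5))),
        ((↑a : Set (Fin 5)), (↑(aᶜ) : Set (Fin 5)))} := by
      ext p
      simp only [Set.mem_insert_iff, Set.mem_singleton_iff]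
      constructor
      · intro hp
        rcases hPmem p hp with rfl | rfl | rfl
        · exact Or.inl rfl
        · exact absurd hp h2
        · exact Or.inr rfl
      · rintro (rfl | rfl)
        exacts [h1, hPA]
    have hodd : ∀ u v, Odd {p ∈ P | crossPair p u v}.ncard ↔
        Xor' (cAA a u v) (cAB a u v) := by
      intro u v
      rw [hP, odd_sep_pair dAAAB]
      exact xor_congr (crossPair_AA a u v) (crossPair_AB a u v)
    rcases hG with rfl | rfl | rfl | rfl
    · exact absurd (main_core c5_adj _ hodd hcomp) (core_c5_AA a hcard')
    · -- bull
      have ha : a = {0, 1} := core_bull_AA a hcard' (main_core bull_adj _ hodd hcomp)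
      refine Or.inr ⟨rfl, ⟨0, 1, by decide, ndeg_bull_0, ndeg_bull_1, ?_⟩, hP⟩
      rw [ha]
      simp
    · exact absurd (main_core gem_adj _ hodd hcomp) (core_gem_AA a hcard')
    · exact absurd (main_core cogem_adj _ hodd hcomp) (core_cogem_AA a hcard')
  · -- P = {(B,B),(A,B)}  (gem case)
    have hP : P = {((↑(aᶜ) : Set (Fin 5)), (↑(aᶜ) : Set (Fin 5))),
        ((↑a : Set (Fin 5)), (↑(aᶜ) : Set (Fin 5)))} := by
      ext p
      simp only [Set.mem_insert_iff, Set.mem_singleton_iff]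
      constructor
      · intro hp
        rcases hPmem p hp with rfl | rfl | rfl
        · exact absurd hp h1
        · exact Or.inl rfl
        · exact Or.inr rfl
      · rintro (rfl | rfl)
        exacts [h2, hPA]
    have hodd : ∀ u v, Odd {p ∈ P | crossPair p u v}.ncard ↔
        Xor' (cBB a u v) (cAB a u v) := by
      intro u v
      rw [hP, odd_sep_pair dBBAB]
      exact xor_congr (crossPair_BB a u v) (crossPair_AB a u v)
    rcases hG with rfl | rfl | rfl | rfl
    · exact absurd (main_core c5_adj _ hodd hcomp) (core_c5_BB a hcard')
    · exact absurd (main_core bull_adj _ hodd hcomp) (core_bull_BB a hcard')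
    · -- gem
      have ha : a = {0, 3} := core_gem_BB a hcard' (main_core gem_adj _ hodd hcomp)
      refine Or.inl ⟨rfl, ⟨0, 3, by decide, ndeg_gem_0, ndeg_gem_3, ?_⟩, hP⟩
      rw [ha]
      simp
    · exact absurd (main_core cogem_adj _ hodd hcomp) (core_cogem_BB a hcard')
  · -- P = {(A,B)}
    have hP : P = {((↑a : Set (Fin 5)), (↑(aᶜ) : Set (Fin 5)))} := by
      ext p
      simp only [Set.mem_singleton_iff]
      constructor
      · intro hp
        rcases hPmem p hp with rfl | rfl | rfl
        · exact absurd hp h1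
        · exact absurd hp h2
        · rfl
      · rintro rfl
        exact hPA
    have hodd : ∀ u v, Odd {p ∈ P | crossPair p u v}.ncard ↔ cAB a u v := by
      intro u v
      rw [hP, odd_sep_singleton]
      exact crossPair_AB a u v
    rcases hG with rfl | rfl | rfl | rfl
    · exact absurd (main_core c5_adj _ hodd hcomp) (core_c5_AB a hcard')
    · exact absurd (main_core bull_adj _ hodd hcomp) (core_bull_AB a hcard')
    · exact absurd (main_core gem_adj _ hodd hcomp) (core_gem_AB a hcard')
    · exact absurd (main_core cogem_adj _ hodd hcomp) (core_cogem_AB a hcard')
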